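/- Let r, σ, b > 0, a ∈ ℝ, and let δ > 0 satisfy a + δ > 0. Set c = min(σ, 1, b/2), η = (σ + δ·r)/(a + δ), V(x, y, z) = x² + δ·y² + (a + δ)·(z − η)², and R = b·(σ + δ·r)²/(2c·(a + δ)). Then at every point (x, y, z) ∈ ℝ³ with V(x, y, z) > R, the derivative of V along the Lorenz-like vector field is strictly negative: ∇V(x, y, z) · f(x, y, z) < 0. -/

import Mathlib

/-- Outside the absorbing set `B = {V ≤ R}` the Lyapunov function `V` strictly
decreases along the Lorenz-like vector field: at every point with
`V(x,y,z) > R` one has `∇V(x,y,z) · f(x,y,z) < 0`. -/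
theorem stmt_19 (r σ b a δ : ℝ) (hr : 0 < r) (hσ : 0 < σ) (hb : 0 < b)
    (hδ : 0 < δ) (haδ : 0 < a + δ) :
    let c := min σ (min 1 (b / 2))
    let η := (σ + δ * r) / (a + δ)
    let V : ℝ → ℝ → ℝ → ℝ := fun X Y Z =>
      X ^ 2 + δ * Y ^ 2 + (a + δ) * (Z - η) ^ 2
    let R := b * (σ + δ * r) ^ 2 / (2 * c * (a + δ))
    ∀ x y z : ℝ, V x y z > R →
      2 * x * (-σ * (x - y) - a * y * z)
        + 2 * (δ * y) * (r * x - y - x * z)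
        + 2 * ((a + δ) * (z - η)) * (-b * z + x * y) < 0 := by
  intro c η V R x y z hV
  have hc : 0 < c := lt_min hσ (lt_min one_pos (by linarith))
  have hcσ : c ≤ σ := min_le_left _ _
  have hc1 : c ≤ 1 := le_trans (min_le_right _ _) (min_le_left _ _)
  have hcb : c ≤ b / 2 := le_trans (min_le_right _ _) (min_le_right _ _)
  have hη : (a + δ) * η = σ + δ * r := by
    simp only [η]
    field_simp [ne_of_gt haδ]
  have hR : 2 * c * R = b * (a + δ) * η ^ 2 := by
    have : η ^ 2 = (σ + δ * r) ^ 2 / (a + δ) ^ 2 := by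
      simp [η, div_pow]
    rw [this]
    simp only [R]
    field_simp [ne_of_gt haδ, ne_of_gt hc]
  have hid : 2 * x * (-σ * (x - y) - a * y * z)
        + 2 * (δ * y) * (r * x - y - x * z)
        + 2 * ((a + δ) * (z - η)) * (-b * z + x * y)
      = -2 * σ * x ^ 2 - 2 * δ * y ^ 2 - 2 * b * (a + δ) * z * (z - η) := by
    have hne : a + δ ≠ 0 := ne_of_gt haδ
    simp only [η]
    field_simp
    ring
  have hz : 2 * z * (z - η) ≥ (z - η) ^ 2 - η ^ 2 := by nlinarith [sq_nonneg z]
  have hVdef : V x y z = x ^ 2 + δ * y ^ 2 + (a + δ) * (z - η) ^ 2 := rfl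
  rw [hid]
  have h1 : -2 * b * (a + δ) * z * (z - η) ≤ -b * (a + δ) * (z - η) ^ 2 + b * (a + δ) * η ^ 2 := by
    nlinarith [mul_pos hb haδ]
  have h2 : 2 * c * V x y z > 2 * c * R := by
    have := hV
    nlinarith
  rw [hVdef] at h2
  rw [hR] at h2
  nlinarith [mul_nonneg (sub_nonneg.2 hcσ) (sq_nonneg x),
    mul_nonneg (mul_nonneg (sub_nonneg.2 hc1) hδ.le) (sq_nonneg y),
    mul_nonneg (mul_nonneg (sub_nonneg.2 hcb) haδ.le) (sq_nonneg (z - η))]
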